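/- Let A be a finite alphabet and R ⊆ List A × List A a set of rewriting rules; define u ⇒ v if there exist (ℓ, r) ∈ R and words x, y with u = x ++ ℓ ++ y and v = x ++ r ++ y, and let ⇒* be the reflexive-transitive closure of ⇒. Suppose (A, R) is noetherian (there is no infinite sequence u₁ ⇒ u₂ ⇒ ⋯), confluent (whenever u ⇒* u' and u ⇒* u'' there exists v with u' ⇒* v and u'' ⇒* v), and the set of left-hand sides {ℓ : ∃ r, (ℓ, r) ∈ R} is a regular language. Then the monoid M presented by ⟨A | R⟩ is Markov as a monoid; moreover, the language of irreducible words (words containing no left-hand side of a rule as a factor) is a monoid Markov language for M over A, where each letter a represents its image in M. Furthermore, if (A, R) is non-length-increasing (|ℓ| ≥ |r| for every rule (ℓ, r) ∈ R), then the language of irreducible words is a robust monoid Markov language for M over A. -/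

import Mathlib

open Function

/-- A language is regular if it is accepted by a deterministic finite automaton
with a finite state set. -/
def RegularLang {A : Type} (L : Language A) : Prop :=
  ∃ (Q : Type) (_ : Fintype Q) (M : DFA A Q), M.accepts = L

/-- The product of a nonempty word under the letter-assignment `φ`; the empty
word is sent to `none`. This is the induced map `φ⁺` on nonempty words. -/
def prodPlus {A S : Type} [Semigroup S] (φ : A → S) : List A → Option S
  | [] => none
  | a :: w => some (w.foldl (fun s b => s * φ b) (φ a))

/-- The induced monoid homomorphism `φ*` from the free monoid of words. -/
def monProd {A M : Type} [Monoid M] (φ : A → M) (w : List A) : M :=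
  (w.map φ).prod

/-- A semigroup Markov language for `S` over `A` (with respect to `φ`): a regular,
`+`-prefix-closed language of nonempty words mapping bijectively onto `S` under `φ⁺`. -/
structure IsSgMarkovLang {A S : Type} [Semigroup S] (φ : A → S) (L : Language A) : Prop where
  regular : RegularLang L
  not_empty_mem : [] ∉ L
  plus_prefix_closed : ∀ u v : List A, u ≠ [] → v ≠ [] → u ++ v ∈ L → u ∈ L
  unique_rep : ∀ s : S, ∃! w : List A, w ∈ L ∧ prodPlus φ w = some s

/-- A robust semigroup Markov language: additionally every word of `L` has minimal
length among (nonempty) words representing the same element. -/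
structure IsRobustSgMarkovLang {A S : Type} [Semigroup S] (φ : A → S) (L : Language A)
    extends IsSgMarkovLang φ L : Prop where
  min_length : ∀ w ∈ L, ∀ v : List A, prodPlus φ v = prodPlus φ w → w.length ≤ v.length

/-- A monoid Markov language for `M` over `A` (with respect to `φ`): a regular,
prefix-closed language mapping bijectively onto `M` under `φ*`. -/
structure IsMonMarkovLang {A M : Type} [Monoid M] (φ : A → M) (L : Language A) : Prop where
  regular : RegularLang L
  prefix_closed : ∀ u v : List A, u ++ v ∈ L → u ∈ L
  unique_rep : ∀ m : M, ∃! w : List A, w ∈ L ∧ monProd φ w = m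

/-- A robust monoid Markov language: additionally every word of `L` has minimal
length among words representing the same element. -/
structure IsRobustMonMarkovLang {A M : Type} [Monoid M] (φ : A → M) (L : Language A)
    extends IsMonMarkovLang φ L : Prop where
  min_length : ∀ w ∈ L, ∀ v : List A, monProd φ v = monProd φ w → w.length ≤ v.length

/-- `S` is Markov as a semigroup. -/
def SgMarkov (S : Type) [Semigroup S] : Prop :=
  ∃ (A : Type) (_ : Fintype A) (φ : A → S),
    (∀ s : S, ∃ w : List A, prodPlus φ w = some s) ∧
    ∃ L : Language A, IsSgMarkovLang φ L

/-- `S` is robustly Markov (as a semigroup) with respect to some alphabet. -/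
def SgRobustlyMarkov (S : Type) [Semigroup S] : Prop :=
  ∃ (A : Type) (_ : Fintype A) (φ : A → S),
    (∀ s : S, ∃ w : List A, prodPlus φ w = some s) ∧
    ∃ L : Language A, IsRobustSgMarkovLang φ L

/-- `S` is strongly Markov (as a semigroup). -/
def SgStronglyMarkov (S : Type) [Semigroup S] : Prop :=
  ∀ (A : Type) [Fintype A] (φ : A → S),
    (∀ s : S, ∃ w : List A, prodPlus φ w = some s) →
    ∃ L : Language A, IsRobustSgMarkovLang φ L

/-- `M` is Markov as a monoid. -/
def MonMarkov (M : Type) [Monoid M] : Prop :=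
  ∃ (A : Type) (_ : Fintype A) (φ : A → M),
    Surjective (monProd φ) ∧ ∃ L : Language A, IsMonMarkovLang φ L

/-- `M` is robustly Markov (as a monoid) with respect to some alphabet. -/
def MonRobustlyMarkov (M : Type) [Monoid M] : Prop :=
  ∃ (A : Type) (_ : Fintype A) (φ : A → M),
    Surjective (monProd φ) ∧ ∃ L : Language A, IsRobustMonMarkovLang φ L

/-- `M` is strongly Markov (as a monoid). -/
def MonStronglyMarkov (M : Type) [Monoid M] : Prop :=
  ∀ (A : Type) [Fintype A] (φ : A → M),
    Surjective (monProd φ) →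
    ∃ L : Language A, IsRobustMonMarkovLang φ L

/-- Single-step rewriting relation of the rewriting system `(A, R)`. -/
def RWStep {A : Type} (R : Set (List A × List A)) (u v : List A) : Prop :=
  ∃ p ∈ R, ∃ x y : List A, u = x ++ p.1 ++ y ∧ v = x ++ p.2 ++ y

/-- The congruence on the free monoid generated by the rewriting rules `R`. -/
def presCon {A : Type} (R : Set (List A × List A)) : Con (FreeMonoid A) :=
  conGen fun u v : FreeMonoid A => (FreeMonoid.toList u, FreeMonoid.toList v) ∈ R

/-- The language of irreducible words: those containing no left-hand side of a rule
as a factor. -/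
def irreducibles {A : Type} (R : Set (List A × List A)) : Language A :=
  {w : List A | ¬ ∃ p ∈ R, ∃ x y : List A, w = x ++ p.1 ++ y}

namespace Stmt9Aux

open Relation FreeMonoid List

variable {A : Type} {R : Set (List A × List A)}

lemma mem_irred {w : List A} :
    w ∈ irreducibles R ↔ ¬ ∃ p ∈ R, ∃ x y : List A, w = x ++ p.1 ++ y := Iff.rfl

lemma irred_iff_no_step {w : List A} :
    w ∈ irreducibles R ↔ ¬ ∃ v, RWStep R w v := by
  constructor
  · rintro h ⟨v, p, hp, x, y, hu, hv⟩
    exact h ⟨p, hp, x, y, hu⟩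
  · rintro h ⟨p, hp, x, y, hu⟩
    exact h ⟨x ++ p.2 ++ y, p, hp, x, y, hu, rfl⟩

lemma step_append_left {u v : List A} (z : List A) (h : RWStep R u v) :
    RWStep R (z ++ u) (z ++ v) := by
  obtain ⟨p, hp, x, y, hu, hv⟩ := h
  exact ⟨p, hp, z ++ x, y, by simp [hu], by simp [hv]⟩

lemma step_append_right {u v : List A} (z : List A) (h : RWStep R u v) :
    RWStep R (u ++ z) (v ++ z) := by
  obtain ⟨p, hp, x, y, hu, hv⟩ := h
  exact ⟨p, hp, x, y ++ z, by simp [hu], by simp [hv]⟩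

lemma star_append {u v u' v' : List A} (hu : ReflTransGen (RWStep R) u u')
    (hv : ReflTransGen (RWStep R) v v') :
    ReflTransGen (RWStep R) (u ++ v) (u' ++ v') := by
  have h1 : ReflTransGen (RWStep R) (u ++ v) (u' ++ v) :=
    ReflTransGen.lift (· ++ v) (fun a b h => step_append_right v h) _ _ hu
  have h2 : ReflTransGen (RWStep R) (u' ++ v) (u' ++ v') :=
    ReflTransGen.lift (u' ++ ·) (fun a b h => step_append_left u' h) _ _ hv
  exact h1.trans h2

variable (wf : WellFounded (fun a b : List A => RWStep R b a))

open Classical in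
noncomputable def nf : List A → List A :=
  wf.fix fun w ih => if h : ∃ v, RWStep R w v then ih h.choose h.choose_spec else w

open Classical in
lemma nf_eq (w : List A) :
    nf wf w = if h : ∃ v, RWStep R w v then nf wf h.choose else w :=
  wf.fix_eq _ w

lemma nf_spec (w : List A) :
    ReflTransGen (RWStep R) w (nf wf w) ∧ nf wf w ∈ irreducibles R := by
  induction w using WellFounded.induction wf with
  | _ w ih =>
    by_cases h : ∃ v, RWStep R w v
    · have hs := h.choose_spec
      obtain ⟨h1, h2⟩ := ih h.choose hs
      rw [nf_eq wf w, dif_pos h]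
      exact ⟨ReflTransGen.head hs h1, h2⟩
    · rw [nf_eq wf w, dif_neg h]
      exact ⟨ReflTransGen.refl, irred_iff_no_step.mpr h⟩

lemma nf_of_irred {w : List A} (h : w ∈ irreducibles R) : nf wf w = w := by
  rw [nf_eq wf w, dif_neg (irred_iff_no_step.mp h)]

lemma star_eq_of_irred {w v : List A} (h : w ∈ irreducibles R)
    (hs : ReflTransGen (RWStep R) w v) : v = w := by
  rcases hs.cases_head with rfl | ⟨c, hc, _⟩
  · rfl
  · exact absurd ⟨c, hc⟩ (irred_iff_no_step.mp h)

lemma nf_eq_of_star (hconf : ∀ u u' u'' : List A,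
    Relation.ReflTransGen (RWStep R) u u' → Relation.ReflTransGen (RWStep R) u u'' →
    ∃ v : List A, Relation.ReflTransGen (RWStep R) u' v ∧
      Relation.ReflTransGen (RWStep R) u'' v) {u v : List A} (h : ReflTransGen (RWStep R) u v) :
    nf wf u = nf wf v := by
  obtain ⟨z, hz1, hz2⟩ := hconf u (nf wf u) (nf wf v) (nf_spec wf u).1 (h.trans (nf_spec wf v).1)
  rw [← star_eq_of_irred (nf_spec wf u).2 hz1, ← star_eq_of_irred (nf_spec wf v).2 hz2]

lemma step_presCon {a b : List A} (h : RWStep R a b) :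
    presCon R (ofList a) (ofList b) := by
  obtain ⟨p, hp, x, y, ha, hb⟩ := h
  subst ha hb
  have hbase : presCon R (ofList p.1) (ofList p.2) :=
    ConGen.Rel.of _ _ (by simpa using hp)
  have := (presCon R).mul ((presCon R).mul ((presCon R).refl (ofList x)) hbase)
    ((presCon R).refl (ofList y))
  simpa [← ofList_append] using this

lemma star_presCon {a b : List A} (h : ReflTransGen (RWStep R) a b) :
    presCon R (ofList a) (ofList b) := by
  induction h with
  | refl => exact (presCon R).refl _
  | tail _ hstep ih => exact (presCon R).trans ih (step_presCon hstep)

noncomputable def nfCon (hconf : ∀ u u' u'' : List A,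
    Relation.ReflTransGen (RWStep R) u u' → Relation.ReflTransGen (RWStep R) u u'' →
    ∃ v : List A, Relation.ReflTransGen (RWStep R) u' v ∧
      Relation.ReflTransGen (RWStep R) u'' v) : Con (FreeMonoid A) where
  r u v := nf wf (toList u) = nf wf (toList v)
  iseqv := ⟨fun _ => rfl, Eq.symm, Eq.trans⟩
  mul' := by
    intro a b c d h1 h2
    show nf wf (toList (a * c)) = nf wf (toList (b * d))
    rw [toList_mul, toList_mul]
    have e1 : nf wf (toList a ++ toList c) = nf wf (nf wf (toList a) ++ nf wf (toList c)) :=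
      nf_eq_of_star wf hconf (star_append (nf_spec wf _).1 (nf_spec wf _).1)
    have e2 : nf wf (toList b ++ toList d) = nf wf (nf wf (toList b) ++ nf wf (toList d)) :=
      nf_eq_of_star wf hconf (star_append (nf_spec wf _).1 (nf_spec wf _).1)
    rw [e1, e2, h1, h2]

lemma presCon_iff (hconf : ∀ u u' u'' : List A,
    Relation.ReflTransGen (RWStep R) u u' → Relation.ReflTransGen (RWStep R) u u'' →
    ∃ v : List A, Relation.ReflTransGen (RWStep R) u' v ∧
      Relation.ReflTransGen (RWStep R) u'' v) {u v : FreeMonoid A} :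
    presCon R u v ↔ nf wf (toList u) = nf wf (toList v) := by
  constructor
  · intro h
    have hle : presCon R ≤ nfCon wf hconf := by
      apply Con.conGen_le.mpr
      intro x y hxy
      show nf wf (toList x) = nf wf (toList y)
      exact nf_eq_of_star wf hconf
        (ReflTransGen.single ⟨(toList x, toList y), hxy, [], [], by simp, by simp⟩)
    exact hle h
  · intro h
    have h1 : presCon R u (ofList (nf wf (toList u))) := by
      have := star_presCon (R := R) (nf_spec wf (toList u)).1
      simpa [ofList_toList] using this
    have h2 : presCon R v (ofList (nf wf (toList v))) := by
      have := star_presCon (R := R) (nf_spec wf (toList v)).1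
      simpa [ofList_toList] using this
    rw [h] at h1
    exact (presCon R).trans h1 ((presCon R).symm h2)

lemma monProd_eq (w : List A) :
    monProd (fun a : A => (presCon R).mk' (FreeMonoid.of a)) w = (presCon R).mk' (ofList w) := by
  induction w with
  | nil => simp [monProd, ofList_nil]
  | cons a w ih =>
    simp only [monProd, List.map_cons, List.prod_cons] at ih ⊢
    rw [ih, ofList_cons, map_mul]

open Classical in
noncomputable def factorDFA {Q : Type} (M : DFA A Q) : DFA A (Option (Set Q)) where
  step o a := o.bind fun S =>
    if ∃ q ∈ insert M.start ((fun q => M.step q a) '' S), q ∈ M.accept then none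
    else some (insert M.start ((fun q => M.step q a) '' S))
  start := if M.start ∈ M.accept then none else some {M.start}
  accept := {o | o ≠ none}

lemma suffix_concat_iff {s w : List A} {a : A} :
    s <:+ w ++ [a] ↔ s = [] ∨ ∃ t, t <:+ w ∧ s = t ++ [a] := by
  constructor
  · rintro ⟨p, hp⟩
    cases s using List.reverseRecOn with
    | nil => exact Or.inl rfl
    | append_singleton t b =>
      rw [← List.append_assoc] at hp
      obtain ⟨h1, h2⟩ := List.append_inj' hp rfl
      obtain rfl : b = a := by simpa using h2
      exact Or.inr ⟨t, ⟨p, h1⟩, rfl⟩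
  · rintro (rfl | ⟨t, ⟨p, hp⟩, rfl⟩)
    · exact ⟨w ++ [a], by simp⟩
    · exact ⟨p, by rw [← List.append_assoc, hp]⟩

lemma not_irred_concat {w : List A} {a : A} :
    (w ++ [a]) ∉ irreducibles R ↔ w ∉ irreducibles R ∨
      ∃ s, s <:+ (w ++ [a]) ∧ s ∈ {ℓ : List A | ∃ r, (ℓ, r) ∈ R} := by
  simp only [mem_irred, not_not]
  constructor
  · rintro ⟨p, hp, x, y, h⟩
    cases y using List.reverseRecOn with
    | nil =>
      refine Or.inr ⟨p.1, ⟨x, ?_⟩, p.2, hp⟩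
      simpa using h.symm
    | append_singleton y' b =>
      rw [show x ++ p.1 ++ (y' ++ [b]) = (x ++ p.1 ++ y') ++ [b] by simp] at h
      obtain ⟨h1, _⟩ := List.append_inj' h rfl
      exact Or.inl ⟨p, hp, x, y', h1⟩
  · rintro (⟨p, hp, x, y, h⟩ | ⟨s, ⟨t, ht⟩, r, hr⟩)
    · exact ⟨p, hp, x, y ++ [a], by simp [h]⟩
    · exact ⟨(s, r), hr, t, [], by simp [← ht]⟩

lemma nil_irred_iff : ([] : List A) ∈ irreducibles R ↔
    ([] : List A) ∉ {ℓ : List A | ∃ r, (ℓ, r) ∈ R} := by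
  simp only [mem_irred, Set.mem_setOf_eq]
  constructor
  · rintro h ⟨r, hr⟩
    exact h ⟨([], r), hr, [], [], rfl⟩
  · rintro h ⟨p, hp, x, y, hxy⟩
    obtain ⟨rfl, h1, rfl⟩ : x = [] ∧ p.1 = [] ∧ y = [] := by
      constructor
      · exact List.append_eq_nil_iff.mp (List.append_eq_nil_iff.mp hxy.symm).1 |>.1
      constructor
      · exact List.append_eq_nil_iff.mp (List.append_eq_nil_iff.mp hxy.symm).1 |>.2
      · exact (List.append_eq_nil_iff.mp hxy.symm).2
    exact h ⟨p.2, by rwa [show p = ([], p.2) from Prod.ext h1 rfl] at hp⟩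

lemma factorDFA_eval {Q : Type} (M : DFA A Q)
    (hM : M.accepts = {ℓ : List A | ∃ r, (ℓ, r) ∈ R}) (w : List A) :
    (w ∉ irreducibles R → (factorDFA M).eval w = none) ∧
    (w ∈ irreducibles R →
      (factorDFA M).eval w = some {q | ∃ s, s <:+ w ∧ M.evalFrom M.start s = q}) := by
  classical
  induction w using List.reverseRecOn with
  | nil =>
    have hh : ([] : List A) ∈ irreducibles R ↔ M.start ∉ M.accept := by
      rw [nil_irred_iff, ← hM]
      exact Iff.not (M.mem_accepts (x := []))
    show (_ → (factorDFA M).start = none) ∧ (_ → (factorDFA M).start = _)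
    by_cases hb : M.start ∈ M.accept
    · refine ⟨fun _ => ?_, fun h => absurd hb (hh.mp h)⟩
      simp only [factorDFA, if_pos hb]
    · refine ⟨fun h => absurd (hh.mpr hb) h, fun _ => ?_⟩
      simp only [factorDFA, if_neg hb]
      congr 1
      ext q
      simp [eq_comm]
  | append_singleton w a ih =>
    rw [DFA.eval_append_singleton]
    by_cases hw : w ∈ irreducibles R
    · rw [ih.2 hw]
      set S' := insert M.start ((fun q => M.step q a) ''
        {q | ∃ s, s <:+ w ∧ M.evalFrom M.start s = q}) with hS'
      have hstep : (factorDFA M).step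
          (some {q | ∃ s, s <:+ w ∧ M.evalFrom M.start s = q}) a =
          if ∃ q ∈ S', q ∈ M.accept then none else some S' := rfl
      have key1 : S' = {q | ∃ s, s <:+ w ++ [a] ∧ M.evalFrom M.start s = q} := by
        ext q
        simp only [hS', Set.mem_insert_iff, Set.mem_image, Set.mem_setOf_eq]
        constructor
        · rintro (rfl | ⟨q', ⟨s, hs, rfl⟩, rfl⟩)
          · exact ⟨[], suffix_concat_iff.mpr (Or.inl rfl), rfl⟩
          · exact ⟨s ++ [a], suffix_concat_iff.mpr (Or.inr ⟨s, hs, rfl⟩),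
              M.evalFrom_append_singleton _ _ _⟩
        · rintro ⟨s, hs, rfl⟩
          rcases suffix_concat_iff.mp hs with rfl | ⟨t, ht, rfl⟩
          · exact Or.inl rfl
          · exact Or.inr ⟨M.evalFrom M.start t, ⟨t, ht, rfl⟩,
              (M.evalFrom_append_singleton _ _ _).symm⟩
      have key2 : (∃ q ∈ S', q ∈ M.accept) ↔ (w ++ [a]) ∉ irreducibles R := by
        rw [not_irred_concat, key1]
        constructor
        · rintro ⟨q, ⟨s, hs, rfl⟩, hq⟩
          refine Or.inr ⟨s, hs, ?_⟩
          rw [← hM]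
          exact M.mem_accepts.mpr hq
        · rintro (h | ⟨s, hs, hsl⟩)
          · exact absurd hw h
          · rw [← hM] at hsl
            exact ⟨M.evalFrom M.start s, ⟨s, hs, rfl⟩, M.mem_accepts.mp hsl⟩
      by_cases hbad : ∃ q ∈ S', q ∈ M.accept
      · rw [hstep, if_pos hbad]
        exact ⟨fun _ => rfl, fun h => absurd h (key2.mp hbad)⟩
      · rw [hstep, if_neg hbad]
        refine ⟨fun h => absurd (not_not.mp (key2.not.mp hbad)) h, fun _ => ?_⟩
        rw [key1]
    · have hwa : (w ++ [a]) ∉ irreducibles R := not_irred_concat.mpr (Or.inl hw)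
      rw [ih.1 hw]
      exact ⟨fun _ => rfl, fun h => absurd h hwa⟩

lemma irred_regular (hreg : RegularLang {ℓ : List A | ∃ r : List A, (ℓ, r) ∈ R}) :
    RegularLang (irreducibles R) := by
  obtain ⟨Q, hQ, M, hM⟩ := hreg
  refine ⟨Option (Set Q), Fintype.ofFinite _, factorDFA M, ?_⟩
  ext w
  rw [DFA.mem_accepts]
  show (factorDFA M).eval w ≠ none ↔ _
  constructor
  · intro h
    by_contra hw
    exact h ((factorDFA_eval M hM w).1 hw)
  · intro h
    rw [(factorDFA_eval M hM w).2 h]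
    simp

lemma star_length_le (hlen : ∀ p ∈ R, p.2.length ≤ p.1.length) {u v : List A}
    (h : ReflTransGen (RWStep R) u v) : v.length ≤ u.length := by
  induction h with
  | refl => exact le_refl _
  | tail _ hstep ih =>
    obtain ⟨p, hp, x, y, h1, h2⟩ := hstep
    have := hlen p hp
    subst h1 h2
    simp only [List.length_append] at ih ⊢
    omega

end Stmt9Aux

/-- If `(A, R)` is a confluent noetherian rewriting system whose set of left-hand sides
is regular, then the monoid presented by `⟨A | R⟩` is Markov as a monoid, the language
of irreducible words being a monoid Markov language; if moreover the system is
non-length-increasing, the language of irreducible words is a robust monoid Markov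
language. -/
theorem stmt9 {A : Type} [Fintype A] (R : Set (List A × List A))
    (hnoeth : ¬ ∃ f : ℕ → List A, ∀ n : ℕ, RWStep R (f n) (f (n + 1)))
    (hconf : ∀ u u' u'' : List A,
      Relation.ReflTransGen (RWStep R) u u' → Relation.ReflTransGen (RWStep R) u u'' →
      ∃ v : List A, Relation.ReflTransGen (RWStep R) u' v ∧
        Relation.ReflTransGen (RWStep R) u'' v)
    (hreg : RegularLang {ℓ : List A | ∃ r : List A, (ℓ, r) ∈ R}) :
    MonMarkov (presCon R).Quotient ∧
    IsMonMarkovLang (fun a : A => (presCon R).mk' (FreeMonoid.of a)) (irreducibles R) ∧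
    ((∀ p ∈ R, p.2.length ≤ p.1.length) →
      IsRobustMonMarkovLang (fun a : A => (presCon R).mk' (FreeMonoid.of a))
        (irreducibles R)) := by
  classical
  open Stmt9Aux FreeMonoid Relation in
  -- well-foundedness of the (reversed) rewriting relation
  have wf : WellFounded (fun a b : List A => RWStep R b a) := by
    by_contra hwf
    apply hnoeth
    have key : ∀ x : List A, ¬ Acc (fun a b : List A => RWStep R b a) x →
        ∃ y, RWStep R x y ∧ ¬ Acc (fun a b : List A => RWStep R b a) y := by
      intro x hx
      by_contra h
      push_neg at h
      exact hx (Acc.intro x fun y hy => h y hy)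
    obtain ⟨a, ha⟩ : ∃ x : List A, ¬ Acc (fun a b : List A => RWStep R b a) x := by
      by_contra h
      push_neg at h
      exact hwf ⟨h⟩
    choose g hg1 hg2 using key
    let F : {x : List A // ¬ Acc (fun a b : List A => RWStep R b a) x} →
        {x : List A // ¬ Acc (fun a b : List A => RWStep R b a) x} :=
      fun p => ⟨g p.1 p.2, hg2 p.1 p.2⟩
    refine ⟨fun n => (F^[n] ⟨a, ha⟩).1, fun n => ?_⟩
    show RWStep R (F^[n] ⟨a, ha⟩).1 (F^[n + 1] ⟨a, ha⟩).1
    rw [Function.iterate_succ_apply']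
    exact hg1 _ _
  set φ : A → (presCon R).Quotient := fun a => (presCon R).mk' (FreeMonoid.of a) with hφ
  have hmon : ∀ w : List A, monProd φ w = (presCon R).mk' (FreeMonoid.ofList w) :=
    fun w => monProd_eq w
  have hmk : ∀ u v : FreeMonoid A,
      (presCon R).mk' u = (presCon R).mk' v ↔ presCon R u v := by
    intro u v
    rw [show (presCon R).mk' u = (u : (presCon R).Quotient) from rfl,
      show (presCon R).mk' v = (v : (presCon R).Quotient) from rfl]
    exact Con.eq _
  have hsurj : Surjective (monProd φ) := by
    intro m
    obtain ⟨u, rfl⟩ := Con.mk'_surjective m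
    exact ⟨FreeMonoid.toList u, by rw [hmon, FreeMonoid.ofList_toList]⟩
  have hML : IsMonMarkovLang φ (irreducibles R) := by
    constructor
    · exact irred_regular hreg
    · -- prefix closed
      intro u v hu
      by_contra h
      rw [mem_irred, not_not] at h
      obtain ⟨p, hp, x, y, rfl⟩ := h
      exact hu ⟨p, hp, x, y ++ v, by simp⟩
    · intro m
      obtain ⟨u, rfl⟩ := Con.mk'_surjective m
      refine ⟨nf wf (FreeMonoid.toList u), ⟨(nf_spec wf _).2, ?_⟩, ?_⟩
      · rw [hmon, hmk, presCon_iff wf hconf, FreeMonoid.toList_ofList,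
          nf_of_irred wf (nf_spec wf _).2]
      · rintro w' ⟨hw', hm⟩
        rw [hmon, hmk, presCon_iff wf hconf, FreeMonoid.toList_ofList,
          nf_of_irred wf hw'] at hm
        exact hm
  refine ⟨⟨A, inferInstance, φ, hsurj, irreducibles R, hML⟩, hML, ?_⟩
  intro hlen
  refine ⟨hML, ?_⟩
  intro w hw v hv
  rw [hmon, hmon, hmk, presCon_iff wf hconf, FreeMonoid.toList_ofList,
    FreeMonoid.toList_ofList, nf_of_irred wf hw] at hv
  have hstar : Relation.ReflTransGen (RWStep R) v w := by
    rw [← hv]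
    exact (nf_spec wf v).1
  exact star_length_le hlen hstar
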